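/- If b is odd, then the product of subsets H' = X_{s_1} X_{s_2} ⋯ X_{s_{n-1}} is a subgroup of H_b, and H' contains the product X_{t_1} ⋯ X_{t_r} for every finite sequence of reflections t_1, ..., t_r of W; in particular X_t ⊆ H' for every reflection t. -/

import Mathlib

noncomputable section

open scoped Pointwise

/-- The general linear group `GL_n(K)`. -/
abbrev GLn (K : Type) [Field K] (n : ℕ) : Type := GL (Fin n) K

/-- `g` is a permutation matrix. -/
def IsPermMat {K : Type} [Field K] {n : ℕ} (g : GLn K n) : Prop :=
  ∃ σ : Equiv.Perm (Fin n),
    ∀ i j : Fin n, (g : Matrix (Fin n) (Fin n) K) i j = if σ j = i then 1 else 0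

/-- `W`, the group of permutation matrices in `GL_n(K)`. -/
def Wset (K : Type) [Field K] (n : ℕ) : Set (GLn K n) := {g | IsPermMat g}

/-- The set `S = {s_1, …, s_{n-1}}` of Coxeter generators of `W`: the matrices of the
adjacent transpositions `(i, i+1)`. -/
def Sset (K : Type) [Field K] (n : ℕ) : Set (GLn K n) :=
  {g | ∃ i j : Fin n, (i : ℕ) + 1 = (j : ℕ) ∧
    ∀ k l : Fin n, (g : Matrix (Fin n) (Fin n) K) k l = if Equiv.swap i j l = k then 1 else 0}

/-- The set `𝒯 = { w s_i w⁻¹ : w ∈ W, s_i ∈ S }` of reflections of `W`. -/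
def Tset (K : Type) [Field K] (n : ℕ) : Set (GLn K n) :=
  {t | ∃ w ∈ Wset K n, ∃ s ∈ Sset K n, t = w * s * w⁻¹}

/-- `H_b`: the group of diagonal matrices whose entries are `b`-th roots of unity
(i.e. entries in `F_b`). -/
def Hbset (K : Type) [Field K] (n b : ℕ) : Set (GLn K n) :=
  {g | (∀ i j : Fin n, i ≠ j → (g : Matrix (Fin n) (Fin n) K) i j = 0) ∧
    ∀ i : Fin n, (g : Matrix (Fin n) (Fin n) K) i i ^ b = 1}

/-- The group `WH_b`: the set of products `w * d` with `w ∈ W` and `d ∈ H_b`. -/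
def WHbset (K : Type) [Field K] (n b : ℕ) : Set (GLn K n) :=
  {x | ∃ w ∈ Wset K n, ∃ d ∈ Hbset K n b, x = w * d}

/-- The length function on monomial matrices: the number of inversions of the underlying
permutation.  For `x = w d ∈ WH_b` this is the Coxeter length `ℓ(w)`, i.e. `len` is the
length function of `W` lifted to `WH_b` via `ℓ(wd) = ℓ(dw) = ℓ(w)`. -/
def len {K : Type} [Field K] {n : ℕ} (g : GLn K n) : ℕ :=
  Set.ncard {p : Fin n × Fin n | p.1 < p.2 ∧ ∃ i i' : Fin n, i' < i ∧
    (g : Matrix (Fin n) (Fin n) K) i p.1 ≠ 0 ∧ (g : Matrix (Fin n) (Fin n) K) i' p.2 ≠ 0}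

/-- The diagonal matrix `h_{k,l}(α) = h_k(α) h_l((-1)^{b-1} α⁻¹)`. -/
def hmat (K : Type) [Field K] {n : ℕ} (b : ℕ) (k l : Fin n) (α : K) :
    Matrix (Fin n) (Fin n) K :=
  Matrix.diagonal fun p => if p = k then α else if p = l then (-1 : K) ^ (b - 1) * α⁻¹ else 1

/-- For a reflection `t` interchanging the `k`-th and `l`-th standard basis vectors
(`t = w s_i w⁻¹`), the subset `X_t = { w h_{i,i+1}(α) w⁻¹ : α ∈ F_b } =
{ h_{k,l}(α) : α^b = 1 }` of `H_b`. -/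
def Xset (K : Type) [Field K] (n b : ℕ) (t : GLn K n) : Set (GLn K n) :=
  {d | ∃ k l : Fin n, ∃ α : K, α ^ b = 1 ∧ k ≠ l ∧
    (∀ p q : Fin n, (t : Matrix (Fin n) (Fin n) K) p q = if Equiv.swap k l q = p then 1 else 0) ∧
    (d : Matrix (Fin n) (Fin n) K) = hmat K b k l α}

/-- `X_s = { h_{k,l}(α) : α^b = 1 }` for the simple reflection `s` interchanging the
`k`-th and `l`-th standard basis vectors. -/
def XsPair (K : Type) [Field K] {n : ℕ} (b : ℕ) (k l : Fin n) : Set (GLn K n) :=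
  {d | ∃ α : K, α ^ b = 1 ∧ (d : Matrix (Fin n) (Fin n) K) = hmat K b k l α}

/-- The product `X_1 ⋯ X_r` of a list of subsets of a monoid. -/
def SetProd {G : Type} [Monoid G] : List (Set G) → Set G
  | [] => {1}
  | X :: L => X * SetProd L

/-- `U`: the group of upper triangular unipotent matrices. -/
def Uset (K : Type) [Field K] (n : ℕ) : Set (GLn K n) :=
  {g | (∀ i j : Fin n, j < i → (g : Matrix (Fin n) (Fin n) K) i j = 0) ∧
    ∀ i : Fin n, (g : Matrix (Fin n) (Fin n) K) i i = 1}

/-- `H_a`: the group of diagonal matrices with entries in `F_a` (the `a`-th roots of unity). -/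
def Haset (K : Type) [Field K] (n a : ℕ) : Set (GLn K n) :=
  {g | (∀ i j : Fin n, i ≠ j → (g : Matrix (Fin n) (Fin n) K) i j = 0) ∧
    ∀ i : Fin n, (g : Matrix (Fin n) (Fin n) K) i i ^ a = 1}

/-- `B_a = H_a U`. -/
def Baset (K : Type) [Field K] (n a : ℕ) : Set (GLn K n) :=
  {g | ∃ h ∈ Haset K n a, ∃ u ∈ Uset K n, g = h * u}

/-- `A_v = ℤ[a, v, v⁻¹]`, realized as polynomials in the indeterminate `a` with
coefficients Laurent polynomials in the indeterminate `v`. -/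
abbrev Av : Type := Polynomial (LaurentPolynomial ℤ)

/-- The indeterminate `a` of `A_v`. -/
def aA : Av := Polynomial.X

/-- The indeterminate `v` of `A_v`. -/
def vA : Av := Polynomial.C (LaurentPolynomial.T 1)

/-- `v⁻¹ ∈ A_v`. -/
def vI : Av := Polynomial.C (LaurentPolynomial.T (-1))

/-- The product of subsets `H' = X_{s_1} X_{s_2} ⋯ X_{s_{n-1}}` of `H_b` (the factor for
an index `i` with `i + 1 ≥ n` is the trivial set `{1}`). -/
def HprimeSet (n b : ℕ) (hn : 0 < n) : Set (GLn ℂ n) :=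
  SetProd (List.ofFn fun i : Fin (n - 1) =>
    XsPair ℂ b (⟨(i : ℕ), by have := i.isLt; omega⟩ : Fin n)
      (⟨(i : ℕ) + 1, by have := i.isLt; omega⟩ : Fin n))

namespace HprimeAux

/-- Diagonal matrices with `b`-th root of unity entries and determinant 1. -/
def Dset (n b : ℕ) : Set (GLn ℂ n) :=
  {g | (∀ i j : Fin n, i ≠ j → (g : Matrix (Fin n) (Fin n) ℂ) i j = 0) ∧
    (∀ i : Fin n, (g : Matrix (Fin n) (Fin n) ℂ) i i ^ b = 1) ∧
    (∏ i : Fin n, (g : Matrix (Fin n) (Fin n) ℂ) i i) = 1}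

theorem coe_diag {n : ℕ} {g : GLn ℂ n}
    (hg : ∀ i j : Fin n, i ≠ j → (g : Matrix (Fin n) (Fin n) ℂ) i j = 0) :
    (g : Matrix (Fin n) (Fin n) ℂ)
      = Matrix.diagonal (fun i => (g : Matrix (Fin n) (Fin n) ℂ) i i) := by
  ext i j
  by_cases h : i = j
  · subst h; simp
  · rw [Matrix.diagonal_apply_ne _ h, hg i j h]

theorem one_mem_D {n b : ℕ} : (1 : GLn ℂ n) ∈ Dset n b := by
  refine ⟨fun i j hij => ?_, fun i => ?_, ?_⟩
  · simp [Matrix.one_apply_ne hij]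
  · simp
  · simp

theorem mul_mem_D {n b : ℕ} {g h : GLn ℂ n} (hg : g ∈ Dset n b) (hh : h ∈ Dset n b) :
    g * h ∈ Dset n b := by
  obtain ⟨hg1, hg2, hg3⟩ := hg
  obtain ⟨hh1, hh2, hh3⟩ := hh
  have key : ((g * h : GLn ℂ n) : Matrix (Fin n) (Fin n) ℂ)
      = Matrix.diagonal (fun i => (g : Matrix (Fin n) (Fin n) ℂ) i i *
        (h : Matrix (Fin n) (Fin n) ℂ) i i) := by
    rw [Units.val_mul, coe_diag hg1, coe_diag hh1, Matrix.diagonal_mul_diagonal]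
    simp
  refine ⟨fun i j hij => ?_, fun i => ?_, ?_⟩
  · rw [key, Matrix.diagonal_apply_ne _ hij]
  · rw [key, Matrix.diagonal_apply_eq, mul_pow, hg2, hh2, one_mul]
  · simp only [key, Matrix.diagonal_apply_eq]
    rw [Finset.prod_mul_distrib, hg3, hh3, one_mul]

theorem entry_ne_zero {n b : ℕ} (hb : 0 < b) {g : GLn ℂ n} (hg : g ∈ Dset n b) (i : Fin n) :
    (g : Matrix (Fin n) (Fin n) ℂ) i i ≠ 0 := by
  intro h0
  have := hg.2.1 i
  rw [h0, zero_pow hb.ne'] at this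
  exact zero_ne_one this

theorem inv_mem_D {n b : ℕ} (hb : 0 < b) {g : GLn ℂ n} (hg : g ∈ Dset n b) :
    g⁻¹ ∈ Dset n b := by
  obtain ⟨hg1, hg2, hg3⟩ := hg
  set d : Fin n → ℂ := fun i => (g : Matrix (Fin n) (Fin n) ℂ) i i with hd
  have hdne : ∀ i, d i ≠ 0 := entry_ne_zero hb ⟨hg1, hg2, hg3⟩
  have h1 : (g : Matrix (Fin n) (Fin n) ℂ) * Matrix.diagonal (fun i => (d i)⁻¹) = 1 := by
    rw [coe_diag hg1, Matrix.diagonal_mul_diagonal]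
    have : (fun i => d i * (d i)⁻¹) = fun _ => (1 : ℂ) := by
      funext i; exact mul_inv_cancel₀ (hdne i)
    rw [show (fun i => (g : Matrix (Fin n) (Fin n) ℂ) i i * (d i)⁻¹) = fun i => d i * (d i)⁻¹
        from rfl, this, Matrix.diagonal_one]
  have key : ((g⁻¹ : GLn ℂ n) : Matrix (Fin n) (Fin n) ℂ)
      = Matrix.diagonal (fun i => (d i)⁻¹) := by
    calc ((g⁻¹ : GLn ℂ n) : Matrix (Fin n) (Fin n) ℂ)
        = ((g⁻¹ : GLn ℂ n) : Matrix (Fin n) (Fin n) ℂ) *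
          ((g : Matrix (Fin n) (Fin n) ℂ) * Matrix.diagonal (fun i => (d i)⁻¹)) := by
          rw [h1, mul_one]
      _ = (((g⁻¹ : GLn ℂ n) : Matrix (Fin n) (Fin n) ℂ) * (g : Matrix (Fin n) (Fin n) ℂ)) *
          Matrix.diagonal (fun i => (d i)⁻¹) := by rw [mul_assoc]
      _ = Matrix.diagonal (fun i => (d i)⁻¹) := by
          rw [← Units.val_mul, inv_mul_cancel, Units.val_one, one_mul]
  refine ⟨fun i j hij => ?_, fun i => ?_, ?_⟩
  · rw [key, Matrix.diagonal_apply_ne _ hij]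
  · rw [key, Matrix.diagonal_apply_eq, inv_pow, hg2, inv_one]
  · simp only [key, Matrix.diagonal_apply_eq]
    rw [Finset.prod_inv_distrib, hg3, inv_one]

/-- `Dset` as a subgroup. -/
def Dsub (n b : ℕ) (hb : 0 < b) : Subgroup (GLn ℂ n) where
  carrier := Dset n b
  one_mem' := one_mem_D
  mul_mem' := mul_mem_D
  inv_mem' := inv_mem_D hb

theorem setProd_subset {G : Type} [Monoid G] (S : Set G) (h1 : (1 : G) ∈ S)
    (hmul : ∀ a ∈ S, ∀ b ∈ S, a * b ∈ S) :
    ∀ L : List (Set G), (∀ X ∈ L, X ⊆ S) → SetProd L ⊆ S := by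
  intro L
  induction L with
  | nil =>
    intro _ x hx
    simp only [SetProd, Set.mem_singleton_iff] at hx
    rw [hx]; exact h1
  | cons X L ih =>
    intro hL x hx
    simp only [SetProd] at hx
    obtain ⟨a, ha, c, hc, rfl⟩ := hx
    exact hmul a (hL X List.mem_cons_self ha) c
      (ih (fun Y hY => hL Y (List.mem_cons_of_mem X hY)) hc)

theorem prod_mem_setProd {G : Type} [Monoid G] {gs : List G} {L : List (Set G)}
    (h : List.Forall₂ (· ∈ ·) gs L) : gs.prod ∈ SetProd L := by
  induction h with
  | nil => simp [SetProd]
  | cons hab _ ih =>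
    rw [List.prod_cons]
    exact Set.mul_mem_mul hab ih

theorem forall₂_ofFn {α β : Type} (R : α → β → Prop) : ∀ {m : ℕ} (f : Fin m → α)
    (g : Fin m → β), (∀ i, R (f i) (g i)) → List.Forall₂ R (List.ofFn f) (List.ofFn g) := by
  intro m
  induction m with
  | zero => intro f g _; simp
  | succ m ih =>
    intro f g h
    rw [List.ofFn_succ, List.ofFn_succ]
    exact List.Forall₂.cons (h 0) (ih _ _ fun i => h i.succ)

theorem prod_ofFn_diagonal {n : ℕ} : ∀ {m : ℕ} (D : Fin m → (Fin n → ℂ)),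
    (List.ofFn fun i => Matrix.diagonal (D i)).prod
      = Matrix.diagonal (fun p => ∏ i, D i p) := by
  intro m
  induction m with
  | zero => intro D; simp [Matrix.diagonal_one]
  | succ m ih =>
    intro D
    rw [List.ofFn_succ, List.prod_cons, ih, Matrix.diagonal_mul_diagonal]
    have h2 : (fun p => D 0 p * ∏ i : Fin m, D i.succ p)
        = fun p => ∏ i : Fin (m + 1), D i p := by
      funext p
      rw [Fin.prod_univ_succ]
    rw [h2]

theorem hmat_mul {n b : ℕ} (k l : Fin n) (α : ℂ) (hα : α ≠ 0) :
    hmat ℂ b k l α * hmat ℂ b k l α⁻¹ = 1 := by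
  have hc : ((-1 : ℂ) ^ (b - 1)) * ((-1 : ℂ) ^ (b - 1)) = 1 := by
    rw [← pow_add]; exact Even.neg_one_pow ⟨b - 1, rfl⟩
  unfold hmat
  rw [Matrix.diagonal_mul_diagonal]
  have : (fun i => (if i = k then α else if i = l then (-1 : ℂ) ^ (b - 1) * α⁻¹ else 1) *
      (if i = k then α⁻¹ else if i = l then (-1 : ℂ) ^ (b - 1) * α⁻¹⁻¹ else 1))
      = fun _ => (1 : ℂ) := by
    funext i
    by_cases hik : i = k
    · simp [hik, mul_inv_cancel₀ hα]
    · by_cases hil : i = l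
      · simp only [if_neg hik, if_pos hil, inv_inv]
        calc (-1 : ℂ) ^ (b - 1) * α⁻¹ * ((-1 : ℂ) ^ (b - 1) * α)
            = ((-1 : ℂ) ^ (b - 1) * (-1 : ℂ) ^ (b - 1)) * (α⁻¹ * α) := by ring
          _ = 1 := by rw [hc, inv_mul_cancel₀ hα, one_mul]
      · simp [hik, hil]
  rw [this, Matrix.diagonal_one]

/-- The unit of `GLn` with value `hmat ℂ b k l α`. -/
def hunit {n : ℕ} (b : ℕ) (k l : Fin n) (α : ℂ) (hα : α ≠ 0) : GLn ℂ n where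
  val := hmat ℂ b k l α
  inv := hmat ℂ b k l α⁻¹
  val_inv := hmat_mul (b := b) k l α hα
  inv_val := by
    have := hmat_mul (b := b) k l α⁻¹ (inv_ne_zero hα)
    rwa [inv_inv] at this

theorem XsPair_subset_Dset {n b : ℕ} (hb : 0 < b) (hodd : Odd b) (k l : Fin n)
    (hkl : k ≠ l) : XsPair ℂ b k l ⊆ Dset n b := by
  rintro d ⟨α, hα, hd⟩
  have hα0 : α ≠ 0 := by
    intro h0; rw [h0, zero_pow hb.ne'] at hα; exact zero_ne_one hα
  have hc : ((-1 : ℂ) ^ (b - 1)) = 1 :=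
    Even.neg_one_pow (Nat.Odd.sub_odd hodd odd_one)
  unfold hmat at hd
  refine ⟨fun i j hij => ?_, fun i => ?_, ?_⟩
  · rw [hd, Matrix.diagonal_apply_ne _ hij]
  · rw [hd, Matrix.diagonal_apply_eq]
    by_cases hik : i = k
    · simpa [hik] using hα
    · by_cases hil : i = l
      · simp only [if_neg hik, if_pos hil, hc, one_mul, inv_pow, hα, inv_one]
      · simp [hik, hil]
  · simp only [hd, Matrix.diagonal_apply_eq]
    have hsplit : ∀ p : Fin n,
        (if p = k then α else if p = l then (-1 : ℂ) ^ (b - 1) * α⁻¹ else 1)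
          = (if p = k then α else 1) * (if p = l then α⁻¹ else 1) := by
      intro p
      by_cases hpk : p = k
      · have hne : ¬ p = l := by rw [hpk]; exact hkl
        simp only [if_pos hpk, if_neg hne, mul_one]
      · by_cases hpl : p = l
        · simp only [if_neg hpk, if_pos hpl, hc, one_mul]
        · simp only [if_neg hpk, if_neg hpl, mul_one]
    rw [Finset.prod_congr rfl fun p _ => hsplit p, Finset.prod_mul_distrib,
      Finset.prod_ite_eq', Finset.prod_ite_eq']
    simp [mul_inv_cancel₀ hα0]

theorem Xset_subset_Dset {n b : ℕ} (hb : 0 < b) (hodd : Odd b) (t : GLn ℂ n) :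
    Xset ℂ n b t ⊆ Dset n b := by
  rintro d ⟨k, l, α, hα, hkl, _, hd⟩
  exact XsPair_subset_Dset hb hodd k l hkl ⟨α, hα, hd⟩

theorem Hprime_subset_Dset {n b : ℕ} (hn : 0 < n) (hb : 0 < b) (hodd : Odd b) :
    HprimeSet n b hn ⊆ Dset n b := by
  apply setProd_subset _ one_mem_D (fun a ha c hc => mul_mem_D ha hc)
  intro X hX
  rw [List.mem_ofFn] at hX
  obtain ⟨i, rfl⟩ := hX
  apply XsPair_subset_Dset hb hodd
  intro h
  have := congrArg Fin.val h
  simp at this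

theorem Dset_subset_Hprime {n b : ℕ} (hn : 0 < n) (hb : 0 < b) (hodd : Odd b) :
    Dset n b ⊆ HprimeSet n b hn := by
  intro g hg
  obtain ⟨hg1, hg2, hg3⟩ := hg
  set d : Fin n → ℂ := fun i => (g : Matrix (Fin n) (Fin n) ℂ) i i with hdDef
  have hdne : ∀ i, d i ≠ 0 := entry_ne_zero hb ⟨hg1, hg2, hg3⟩
  set d' : ℕ → ℂ := fun q => if h : q < n then d ⟨q, h⟩ else 1 with hd'Def
  have hd'ne : ∀ q, d' q ≠ 0 := by
    intro q
    by_cases h : q < n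
    · simpa [hd'Def, h] using hdne ⟨q, h⟩
    · simp [hd'Def, h]
  have hd'pow : ∀ q, d' q ^ b = 1 := by
    intro q
    by_cases h : q < n
    · simpa [hd'Def, h] using hg2 ⟨q, h⟩
    · simp [hd'Def, h]
  set A : ℕ → ℂ := fun j => ∏ q ∈ Finset.range (j + 1), d' q with hADef
  have hAne : ∀ j, A j ≠ 0 := fun j =>
    Finset.prod_ne_zero_iff.2 fun q _ => hd'ne q
  have hApow : ∀ j, A j ^ b = 1 := by
    intro j
    simp only [hADef]
    rw [← Finset.prod_pow]
    exact Finset.prod_eq_one fun q _ => hd'pow q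
  have hd'prod : ∏ q ∈ Finset.range n, d' q = 1 := by
    rw [← Fin.prod_univ_eq_prod_range d' n]
    rw [show (fun i : Fin n => d' i) = d by funext i; simp [hd'Def, i.isLt]]
    exact hg3
  have hc : ((-1 : ℂ) ^ (b - 1)) = 1 :=
    Even.neg_one_pow (Nat.Odd.sub_odd hodd odd_one)
  -- the list of units whose product is g
  set ki : Fin (n - 1) → Fin n := fun i => ⟨(i : ℕ), by have := i.isLt; omega⟩ with hkiDef
  set li : Fin (n - 1) → Fin n := fun i => ⟨(i : ℕ) + 1, by have := i.isLt; omega⟩ with hliDef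
  set gs : List (GLn ℂ n) :=
    List.ofFn (fun i : Fin (n - 1) => hunit b (ki i) (li i) (A i) (hAne i)) with hgsDef
  have hmem : gs.prod ∈ HprimeSet n b hn := by
    apply prod_mem_setProd
    apply forall₂_ofFn
    intro i
    exact ⟨A i, hApow i, rfl⟩
  have hcoe : (gs.prod : Matrix (Fin n) (Fin n) ℂ)
      = Matrix.diagonal (fun p => ∏ i : Fin (n - 1),
          (if p = ki i then A i else if p = li i then (-1 : ℂ) ^ (b - 1) * (A i)⁻¹ else 1)) := by
    have h1 : (gs.prod : Matrix (Fin n) (Fin n) ℂ)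
        = (gs.map (Units.coeHom (Matrix (Fin n) (Fin n) ℂ))).prod :=
      (Units.coeHom (Matrix (Fin n) (Fin n) ℂ)).map_list_prod gs
    rw [h1, hgsDef, List.map_ofFn]
    have h2 : ((Units.coeHom (Matrix (Fin n) (Fin n) ℂ)) ∘
        fun i : Fin (n - 1) => hunit b (ki i) (li i) (A i) (hAne i))
        = fun i : Fin (n - 1) => Matrix.diagonal (fun p =>
            if p = ki i then A i else if p = li i then (-1 : ℂ) ^ (b - 1) * (A i)⁻¹ else 1) := by
      funext i
      rfl
    rw [h2, prod_ofFn_diagonal]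
  have hentry : ∀ p : Fin n, (∏ i : Fin (n - 1),
      (if p = ki i then A i else if p = li i then (-1 : ℂ) ^ (b - 1) * (A i)⁻¹ else 1)) = d p := by
    intro p
    set F : ℕ → ℂ := fun i =>
      (if (p : ℕ) = i then A i else 1) * (if (p : ℕ) = i + 1 then (A i)⁻¹ else 1) with hFDef
    have hstep : ∀ i : Fin (n - 1),
        (if p = ki i then A i else if p = li i then (-1 : ℂ) ^ (b - 1) * (A i)⁻¹ else 1)
          = F (i : ℕ) := by
      intro i
      have hk : (p = ki i) ↔ ((p : ℕ) = (i : ℕ)) := by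
        rw [Fin.ext_iff]
      have hl : (p = li i) ↔ ((p : ℕ) = (i : ℕ) + 1) := by
        rw [Fin.ext_iff]
      rw [hFDef]
      by_cases h1 : (p : ℕ) = (i : ℕ)
      · have h2 : ¬ ((p : ℕ) = (i : ℕ) + 1) := by omega
        simp only [if_pos (hk.2 h1), if_pos h1, if_neg h2, mul_one]
      · by_cases h2 : (p : ℕ) = (i : ℕ) + 1
        · have hpk : ¬ p = ki i := fun h => h1 (hk.1 h)
          simp only [if_neg hpk, if_pos (hl.2 h2), hc, one_mul, if_neg h1, if_pos h2]
        · have hpk : ¬ p = ki i := fun h => h1 (hk.1 h)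
          have hpl : ¬ p = li i := fun h => h2 (hl.1 h)
          simp only [if_neg hpk, if_neg hpl, if_neg h1, if_neg h2, mul_one]
    rw [Finset.prod_congr rfl fun i _ => hstep i, Fin.prod_univ_eq_prod_range F (n - 1)]
    rw [hFDef]
    rw [Finset.prod_mul_distrib]
    rw [Finset.prod_ite_eq]
    rcases hp : (p : ℕ) with _ | m
    · -- p = 0
      have hsecond : (∏ i ∈ Finset.range (n - 1),
          if (0 : ℕ) = i + 1 then (A i)⁻¹ else 1) = 1 := by
        apply Finset.prod_eq_one
        intro i _
        simp
      rw [hsecond, mul_one]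
      have hd'0 : d' 0 = d ⟨0, hn⟩ := by
        simp only [hd'Def]
        rw [dif_pos hn]
      have hdp : d p = d' 0 := by
        rw [hd'0]
        exact congrArg d (Fin.ext hp)
      by_cases hn1 : (0 : ℕ) ∈ Finset.range (n - 1)
      · rw [if_pos hn1]
        have hA0 : A 0 = d' 0 := by
          simp only [hADef]
          exact Finset.prod_range_one d'
        rw [hA0, hdp]
      · rw [if_neg hn1]
        have hn1' : n = 1 := by
          rw [Finset.mem_range] at hn1
          have := p.isLt
          omega
        rw [hdp]
        have h1 : ∏ q ∈ Finset.range n, d' q = d' 0 := by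
          rw [hn1', Finset.prod_range_one]
        rw [← h1, hd'prod]
    · -- p = m + 1
      have hmlt : m ∈ Finset.range (n - 1) := by
        rw [Finset.mem_range]
        have := p.isLt
        omega
      have hsecond : (∏ i ∈ Finset.range (n - 1),
          if m + 1 = i + 1 then (A i)⁻¹ else 1) = (A m)⁻¹ := by
        have hcong : ∀ i ∈ Finset.range (n - 1),
            (if m + 1 = i + 1 then (A i)⁻¹ else 1) = (if m = i then (A i)⁻¹ else 1) := by
          intro i _
          by_cases h : m = i
          · simp [h]
          · have h' : ¬ (m + 1 = i + 1) := by omega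
            simp [h, h']
        rw [Finset.prod_congr rfl hcong, Finset.prod_ite_eq, if_pos hmlt]
      rw [hsecond]
      have hmn : m + 1 < n := hp ▸ p.isLt
      have hdp : d p = d' (m + 1) := by
        have : d' (m + 1) = d ⟨m + 1, hmn⟩ := by
          simp only [hd'Def]
          rw [dif_pos hmn]
        rw [this]
        exact congrArg d (Fin.ext hp)
      have hAsucc : A (m + 1) = A m * d' (m + 1) := by
        simp only [hADef]
        exact Finset.prod_range_succ d' (m + 1)
      by_cases hlt : m + 1 ∈ Finset.range (n - 1)
      · rw [if_pos hlt, hAsucc, hdp]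
        rw [mul_comm (A m) (d' (m + 1)), mul_assoc, mul_inv_cancel₀ (hAne m), mul_one]
      · rw [if_neg hlt, one_mul, hdp]
        have hAm : A m * d' (m + 1) = 1 := by
          rw [← hAsucc]
          simp only [hADef]
          have h2 : m + 1 + 1 = n := by
            rw [Finset.mem_range] at hlt
            have := p.isLt
            omega
          rw [h2, hd'prod]
        exact inv_eq_of_mul_eq_one_right hAm
  have hgeq : gs.prod = g := by
    apply Units.ext
    rw [hcoe, coe_diag hg1]
    exact congrArg Matrix.diagonal (funext hentry)
  rw [← hgeq]
  exact hmem

theorem Hprime_eq_Dset (n b : ℕ) (hn : 0 < n) (hb : 0 < b) (hodd : Odd b) :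
    HprimeSet n b hn = Dset n b :=
  Set.Subset.antisymm (Hprime_subset_Dset hn hb hodd) (Dset_subset_Hprime hn hb hodd)

end HprimeAux

/-- If `b` is odd then `H' = X_{s_1} ⋯ X_{s_{n-1}}` is a subgroup of
`H_b` containing the product `X_{t_1} ⋯ X_{t_r}` for every finite sequence of reflections
`t_1, …, t_r`; in particular `X_t ⊆ H'` for every reflection `t`. -/
theorem Hprime_subgroup (n b : ℕ) (hn : 0 < n) (hb : 0 < b) (hodd : Odd b) :
    HprimeSet n b hn ⊆ Hbset ℂ n b ∧
    (∃ Hsub : Subgroup (GLn ℂ n), (Hsub : Set (GLn ℂ n)) = HprimeSet n b hn) ∧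
    (∀ L : List (GLn ℂ n), (∀ t ∈ L, t ∈ Tset ℂ n) →
      SetProd (L.map (Xset ℂ n b)) ⊆ HprimeSet n b hn) ∧
    (∀ t ∈ Tset ℂ n, Xset ℂ n b t ⊆ HprimeSet n b hn) := by
  have hEq := HprimeAux.Hprime_eq_Dset n b hn hb hodd
  refine ⟨?_, ?_, ?_, ?_⟩
  · rw [hEq]
    rintro g ⟨h1, h2, _⟩
    exact ⟨h1, h2⟩
  · exact ⟨HprimeAux.Dsub n b hb, hEq.symm⟩
  · intro L _
    rw [hEq]
    apply HprimeAux.setProd_subset _ HprimeAux.one_mem_D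
      (fun a ha c hc => HprimeAux.mul_mem_D ha hc)
    intro X hX
    rw [List.mem_map] at hX
    obtain ⟨t, _, rfl⟩ := hX
    exact HprimeAux.Xset_subset_Dset hb hodd t
  · intro t _
    rw [hEq]
    exact HprimeAux.Xset_subset_Dset hb hodd t
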